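/- Let n ≥ 2 be odd, let m' be an even positive integer, set d = gcd(2n, m'), m = m'/d, and m* = m'/2. Let F be the (n−1)×(n−1) integer matrix with F_{1j} = n−j, F_{j+1,j} = −n, and all other entries 0. Define ν : (ℤ/m'ℤ)^{n−1} → (ℤ/m'ℤ)^{n−1} by ν(p) = 2·p·F (row vector times matrix). Then the image of ν has cardinality m*·m^{n−2}. -/

import Mathlib

lemma card_range_mul (m' : ℕ) [NeZero m'] (a : ℕ) :
    Nat.card (Set.range fun x : ZMod m' => (a : ZMod m') * x) = m' / Nat.gcd m' a := by
  have h : (Set.range fun x : ZMod m' => (a : ZMod m') * x)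
      = ((AddSubgroup.zmultiples ((a : ZMod m'))) : Set (ZMod m')) := by
    ext x
    constructor
    · rintro ⟨y, rfl⟩
      obtain ⟨z, rfl⟩ := ZMod.intCast_surjective y
      exact ⟨z, by simp [zsmul_eq_mul, mul_comm]⟩
    · rintro ⟨z, rfl⟩
      exact ⟨(z : ZMod m'), by simp [zsmul_eq_mul, mul_comm]⟩
  rw [h]
  have := Nat.card_zmultiples ((a : ZMod m'))
  exact this.trans (ZMod.addOrderOf_coe a (NeZero.ne m'))

theorem aux (N n m' : ℕ) [NeZero m'] (hN : 2 ≤ N) (hnN : N + 1 = n)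
    (F : Matrix (Fin N) (Fin N) (ZMod m'))
    (hF : ∀ i j : Fin N, F i j =
      if i.val = 0 then (((n : ℤ) - (j.val + 1) : ℤ) : ZMod m')
      else if i.val = j.val + 1 then ((-(n : ℤ) : ℤ) : ZMod m') else 0) :
    Nat.card (Set.range fun p : Fin N → ZMod m' =>
        (2 : ZMod m') • Matrix.vecMul p F)
      = (m' / Nat.gcd m' 2) * (m' / Nat.gcd m' (2 * n)) ^ (N - 1) := by
  have h0 : (0:ℕ) < N := by omega
  have hl : N - 1 < N := by omega
  set i0 : Fin N := ⟨0, h0⟩ with hi0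
  set last : Fin N := ⟨N-1, hl⟩ with hlast
  set ν : (Fin N → ZMod m') → Fin N → ZMod m' :=
    fun p => (2 : ZMod m') • Matrix.vecMul p F with hν
  set c : Fin N → ZMod m' := fun j => (((n : ℤ) - (j.val + 1) : ℤ) : ZMod m') with hc
  set d : Fin N → ZMod m' :=
    fun j => if j.val = N - 1 then (2 : ZMod m') else ((-(2 * (n:ℤ)) : ℤ) : ZMod m') with hd
  set r : Fin N → Fin N :=
    fun j => if h : j.val + 1 < N then ⟨j.val + 1, h⟩ else i0 with hr
  set S : (Fin N → ZMod m') → Fin N → ZMod m' :=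
    fun q j => if j.val = N - 1 then q j else q j - c j * q last with hS
  -- vecMul formula
  have hvm : ∀ (p : Fin N → ZMod m') (j : Fin N),
      Matrix.vecMul p F j = p i0 * c j +
        (if h : j.val + 1 < N then p ⟨j.val + 1, h⟩ * ((-(n:ℤ) : ℤ) : ZMod m') else 0) := by
    intro p j
    have hsum : Matrix.vecMul p F j = ∑ i, p i * F i j := by
      simp [Matrix.vecMul, dotProduct]
    by_cases h : j.val + 1 < N
    · rw [dif_pos h, hsum]
      have hne : i0 ≠ (⟨j.val + 1, h⟩ : Fin N) := by
        intro hh; have := congrArg Fin.val hh; simp [hi0] at this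
      rw [Finset.sum_eq_add_of_mem i0 ⟨j.val + 1, h⟩ (Finset.mem_univ _) (Finset.mem_univ _) hne
        (fun k _ hk => by
          rw [hF, if_neg (fun hh => hk.1 (Fin.ext (by simp [hi0, hh]))),
            if_neg (fun hh => hk.2 (Fin.ext (by simp [hh]))), mul_zero])]
      rw [hF, hF]
      simp [hi0, hc]
    · rw [dif_neg h, add_zero, hsum]
      rw [Finset.sum_eq_single_of_mem i0 (Finset.mem_univ _)
        (fun k _ hk => by
          rw [hF, if_neg (fun hh => hk (Fin.ext (by simp [hi0, hh]))),
            if_neg (fun hh => absurd hh (by have := k.isLt; omega)), mul_zero])]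
      rw [hF]
      simp [hi0, hc]
  have hvlast : ∀ p : Fin N → ZMod m', Matrix.vecMul p F last = p i0 := by
    intro p
    rw [hvm, dif_neg (by simp [hlast]; omega)]
    have h1 : c last = 1 := by
      have : ((n : ℤ) - ((last.val : ℤ) + 1)) = 1 := by simp [hlast]; omega
      rw [hc]; simp only []; rw [this]; exact Int.cast_one
    rw [h1, mul_one, add_zero]
  -- key identity
  have key : ∀ p : Fin N → ZMod m', S (ν p) = fun j => d j * p (r j) := by
    intro p
    funext j
    simp only [hS, hν, hd, hr, Pi.smul_apply, smul_eq_mul]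
    by_cases hj : j.val = N - 1
    · rw [if_pos hj, if_pos hj, dif_neg (by omega)]
      rw [show j = last from Fin.ext hj, hvlast]
    · have hjlt : j.val + 1 < N := by have := j.isLt; omega
      rw [if_neg hj, if_neg hj, dif_pos hjlt, hvm, hvlast, dif_pos hjlt, hc]
      simp only []
      push_cast
      ring
  -- S injective
  have hSinj : Function.Injective S := by
    apply Function.LeftInverse.injective
      (g := fun q : Fin N → ZMod m' => fun j => if j.val = N - 1 then q j else q j + c j * q last)
    intro q
    funext j
    simp only [hS]
    by_cases hj : j.val = N - 1
    · rw [if_pos hj, if_pos hj]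
    · rw [if_neg hj, if_neg hj]
      rw [if_pos (show last.val = N - 1 from rfl)]
      ring
  -- r injective, hence the precomposition is surjective
  have hrinj : Function.Injective r := by
    intro a b hab
    have ha := a.isLt; have hb := b.isLt
    have := congrArg Fin.val hab
    simp only [hr] at this
    apply Fin.ext
    split_ifs at this <;> simp [hi0] at this <;> omega
  have hrbij := (Finite.injective_iff_bijective.mp hrinj)
  have hcompsurj : Function.Surjective (fun p : Fin N → ZMod m' => p ∘ r) := by
    intro q
    refine ⟨q ∘ Function.surjInv hrbij.surjective, ?_⟩
    funext j
    simp only [Function.comp_apply]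
    exact congrArg q (Function.leftInverse_surjInv hrbij j)
  -- chain of equalities
  have e1 : Nat.card (Set.range ν) = Nat.card (S '' Set.range ν) :=
    (Nat.card_image_of_injective hSinj _).symm
  have e2 : S '' Set.range ν = Set.range fun p => S (ν p) := (Set.range_comp S ν).symm
  have e3 : (Set.range fun p => S (ν p))
      = Set.range fun q : Fin N → ZMod m' => fun j => d j * q j := by
    have : (fun p => S (ν p))
        = (fun q : Fin N → ZMod m' => fun j => d j * q j) ∘ (fun p => p ∘ r) := by
      funext p; exact key p
    rw [this, Function.Surjective.range_comp hcompsurj]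
  have e4 : (Set.range fun q : Fin N → ZMod m' => fun j => d j * q j)
      = Set.pi Set.univ (fun j => Set.range fun x : ZMod m' => d j * x) := by
    ext q
    constructor
    · rintro ⟨p, rfl⟩ j _; exact ⟨p j, rfl⟩
    · intro hq
      choose p hp using fun j => hq j (Set.mem_univ j)
      exact ⟨p, funext hp⟩
  have e5 : Nat.card (Set.pi Set.univ (fun j => Set.range fun x : ZMod m' => d j * x))
      = ∏ j, Nat.card (Set.range fun x : ZMod m' => d j * x) := by
    rw [Nat.card_congr (Equiv.Set.univPi _), Nat.card_pi]
  rw [e1, e2, e3, e4, e5]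
  -- compute the factors
  have hfl : Nat.card (Set.range fun x : ZMod m' => d last * x) = m' / Nat.gcd m' 2 := by
    have : d last = ((2 : ℕ) : ZMod m') := by
      rw [hd]; simp [hlast]
    rw [this]
    exact card_range_mul m' 2
  have hfo : ∀ j : Fin N, j ≠ last →
      Nat.card (Set.range fun x : ZMod m' => d j * x) = m' / Nat.gcd m' (2 * n) := by
    intro j hj
    have hjv : ¬ (j.val = N - 1) := fun h => hj (Fin.ext (by simp [hlast, h]))
    have hdj : d j = ((-(2 * (n:ℤ)) : ℤ) : ZMod m') := by rw [hd]; simp [hjv]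
    have hrange : (Set.range fun x : ZMod m' => d j * x)
        = Set.range fun x : ZMod m' => ((2 * n : ℕ) : ZMod m') * x := by
      ext x
      constructor
      · rintro ⟨y, rfl⟩
        exact ⟨-y, by rw [hdj]; push_cast; ring⟩
      · rintro ⟨y, rfl⟩
        exact ⟨-y, by rw [hdj]; push_cast; ring⟩
    rw [hrange]
    exact card_range_mul m' (2 * n)
  rw [← Finset.mul_prod_erase Finset.univ _ (Finset.mem_univ last), hfl,
    Finset.prod_congr rfl (fun j hj => hfo j (Finset.mem_erase.mp hj).1),
    Finset.prod_const, Finset.card_erase_of_mem (Finset.mem_univ last),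
    Finset.card_univ, Fintype.card_fin]

theorem stmt6 (n m' : ℕ) (hn : 2 ≤ n) (hodd : Odd n)
    (hm : 0 < m') (heven : Even m')
    (F : Matrix (Fin (n - 1)) (Fin (n - 1)) (ZMod m'))
    (hF : ∀ i j : Fin (n - 1), F i j =
      if i.val = 0 then (((n : ℤ) - (j.val + 1) : ℤ) : ZMod m')
      else if i.val = j.val + 1 then ((-(n : ℤ) : ℤ) : ZMod m') else 0) :
    Nat.card (Set.range fun p : Fin (n - 1) → ZMod m' =>
        (2 : ZMod m') • Matrix.vecMul p F) =
      (m' / 2) * (m' / Nat.gcd (2 * n) m') ^ (n - 2) := by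
  obtain ⟨N, rfl⟩ : ∃ N, n = N + 1 := ⟨n - 1, by omega⟩
  haveI : NeZero m' := ⟨hm.ne'⟩
  obtain ⟨k, hk⟩ := hodd
  have hN : 2 ≤ N := by omega
  have h2 : Nat.gcd m' 2 = 2 := by
    rw [Nat.gcd_comm]
    exact Nat.gcd_eq_left (even_iff_two_dvd.mp heven)
  have := aux N (N + 1) m' hN rfl F hF
  rw [h2, Nat.gcd_comm] at this
  exact this
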